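/- Let p and p+2 be prime with the modified two-prime sequence s_B of period N = p(p+2) as defined. Then -2·S_B(2)·T_B(2^{-1}) ≡ p(p+2) - 4·(2^{p(p+2)} - 1)/(2^{p+2} - 1) + 1 (mod 2^N - 1), given that the autocorrelation of s_B equals -1 at nonzero shifts τ ≡ 0 (mod p+2) and 3 at all other nonzero shifts. -/

import Mathlib

/-- The modified two-prime sequence of period `p * (p + 2)`, with values in `{0, 1}`. -/
def modTwoPrimeSeq (p i : ℕ) : ℕ :=
  if (i : ZMod (p + 2)) = 0 then 1
  else if (i : ZMod p) = 0 then 1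
  else ((1 - jacobiSym (i : ℤ) p * jacobiSym (i : ℤ) (p + 2)) / 2).toNat

/-- The periodic autocorrelation of the modified two-prime sequence. -/
def autocorrB (p : ℕ) (τ : ℕ) : ℤ :=
  ∑ i ∈ Finset.range (p * (p + 2)),
    (-1 : ℤ) ^ (modTwoPrimeSeq p i + modTwoPrimeSeq p ((i + τ) % (p * (p + 2))))

section Aux

variable {R : Type*} [CommRing R]

lemma seq_zero_or_one (p i : ℕ) : modTwoPrimeSeq p i = 0 ∨ modTwoPrimeSeq p i = 1 := by
  unfold modTwoPrimeSeq
  split_ifs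
  · right; rfl
  · right; rfl
  · rcases jacobiSym.trichotomy (i : ℤ) p with h1 | h1 | h1 <;>
      rcases jacobiSym.trichotomy (i : ℤ) (p + 2) with h2 | h2 | h2 <;>
      rw [h1, h2] <;> norm_num

lemma shift_sum (N j : ℕ) (hj : j < N) (g : ℕ → R) :
    ∑ i ∈ Finset.range N, g i = ∑ τ ∈ Finset.range N, g ((j + τ) % N) := by
  have hNpos : 0 < N := lt_of_le_of_lt (Nat.zero_le j) hj
  have key : ∀ a < N, (j + (a + (N - j)) % N) % N = a := by
    intro a ha
    rw [Nat.add_mod_mod]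
    have h1 : j + (a + (N - j)) = a + N := by omega
    rw [h1, Nat.add_mod_right, Nat.mod_eq_of_lt ha]
  refine Finset.sum_nbij' (fun a => (a + (N - j)) % N) (fun τ => (j + τ) % N) ?_ ?_ ?_ ?_ ?_
  · intro a _; exact Finset.mem_range.mpr (Nat.mod_lt _ hNpos)
  · intro a _; exact Finset.mem_range.mpr (Nat.mod_lt _ hNpos)
  · intro a ha; exact key a (Finset.mem_range.mp ha)
  · intro τ hτ
    show ((j + τ) % N + (N - j)) % N = τ
    rw [Nat.mod_add_mod]
    have h1 : j + τ + (N - j) = τ + N := by omega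
    rw [h1, Nat.add_mod_right, Nat.mod_eq_of_lt (Finset.mem_range.mp hτ)]
  · intro a ha
    show g a = g ((j + (a + (N - j)) % N) % N)
    rw [key a (Finset.mem_range.mp ha)]

lemma mult_sum (p N : ℕ) (hN : N = p * (p + 2)) (x : R) :
    ∑ τ ∈ Finset.range N, (if (p + 2) ∣ τ then x ^ τ else 0) =
      ∑ k ∈ Finset.range p, (x ^ (p + 2)) ^ k := by
  rw [← Finset.sum_filter]
  refine (Finset.sum_nbij' (fun k => k * (p + 2)) (fun τ => τ / (p + 2)) ?_ ?_ ?_ ?_ ?_).symm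
  · intro k hk
    simp only [Finset.mem_filter, Finset.mem_range] at hk ⊢
    exact ⟨by rw [hN]; exact Nat.mul_lt_mul_of_pos_right hk (by omega), dvd_mul_left (p + 2) k⟩
  · intro τ hτ
    simp only [Finset.mem_filter, Finset.mem_range] at hτ ⊢
    obtain ⟨hlt, m, rfl⟩ := hτ
    rw [Nat.mul_div_cancel_left m (by omega : 0 < p + 2)]
    rw [hN, mul_comm (p + 2) m] at hlt
    exact Nat.lt_of_mul_lt_mul_right hlt
  · intro k _; exact Nat.mul_div_cancel k (by omega : 0 < p + 2)
  · intro τ hτ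
    simp only [Finset.mem_filter] at hτ
    exact Nat.div_mul_cancel hτ.2
  · intro k _
    rw [← pow_mul, mul_comm]

lemma autocorr_zero (p : ℕ) : autocorrB p 0 = ((p * (p + 2) : ℕ) : ℤ) := by
  unfold autocorrB
  have h : ∀ i ∈ Finset.range (p * (p + 2)),
      (-1 : ℤ) ^ (modTwoPrimeSeq p i + modTwoPrimeSeq p ((i + 0) % (p * (p + 2)))) = 1 := by
    intro i hi
    rw [Nat.add_zero, Nat.mod_eq_of_lt (Finset.mem_range.mp hi)]
    exact Even.neg_one_pow ⟨_, rfl⟩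
  rw [Finset.sum_congr rfl h, Finset.sum_const, Finset.card_range, nsmul_eq_mul, mul_one]

end Aux

theorem stmt_15 (p : ℕ) (hp : p.Prime) (hodd : Odd p) (hp2 : (p + 2).Prime)
    (N : ℕ) (hN : N = p * (p + 2))
    (hauto : ∀ τ, 0 < τ → τ < N →
      (τ % (p + 2) = 0 → autocorrB p τ = -1) ∧ (τ % (p + 2) ≠ 0 → autocorrB p τ = 3)) :
    (-2 : ZMod (2 ^ N - 1)) *
        (∑ i ∈ Finset.range N, (modTwoPrimeSeq p i : ZMod (2 ^ N - 1)) * 2 ^ i) *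
        (∑ i ∈ Finset.range N,
          (-1 : ZMod (2 ^ N - 1)) ^ (modTwoPrimeSeq p i) * ((2 : ZMod (2 ^ N - 1))⁻¹) ^ i) =
      (((p * (p + 2) : ℤ) - 4 * ((2 ^ (p * (p + 2)) - 1) / (2 ^ (p + 2) - 1)) + 1 : ℤ) :
        ZMod (2 ^ N - 1)) := by
  have hp0 : 0 < p := hp.pos
  have hNpos : 0 < N := by rw [hN]; positivity
  set R := ZMod (2 ^ N - 1) with hR
  have h1le : 1 ≤ 2 ^ N := Nat.one_le_two_pow
  have h2N : (2 : R) ^ N = 1 := by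
    have h0 : ((2 ^ N - 1 : ℕ) : R) = 0 := ZMod.natCast_self _
    rw [Nat.cast_sub h1le] at h0
    push_cast at h0
    exact sub_eq_zero.mp h0
  have hu : (2 : R) * 2 ^ (N - 1) = 1 := by
    rw [← pow_succ', Nat.sub_add_cancel hNpos]
    exact h2N
  have hinv : (2 : R)⁻¹ * 2 = 1 :=
    ZMod.inv_mul_of_unit 2 (IsUnit.of_mul_eq_one _ hu)
  have hiv : ∀ j : ℕ, (2 : R) ^ j * ((2 : R)⁻¹) ^ j = 1 := by
    intro j
    rw [← mul_pow, mul_comm (2 : R), hinv, one_pow]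
  have hmodpow : ∀ a : ℕ, (2 : R) ^ (a % N) = 2 ^ a := by
    intro a
    conv_rhs => rw [← Nat.mod_add_div a N]
    rw [pow_add, pow_mul, h2N, one_pow, mul_one]
  have hgeo : ∑ i ∈ Finset.range N, (2 : R) ^ i = 0 := by
    have hg := geom_sum_mul (2 : R) N
    rw [h2N, sub_self] at hg
    have h21 : (2 : R) - 1 = 1 := by norm_num
    rwa [h21, mul_one] at hg
  have hS : (-2 : R) * (∑ i ∈ Finset.range N, (modTwoPrimeSeq p i : R) * 2 ^ i) =
      ∑ i ∈ Finset.range N, ((-1 : R) ^ (modTwoPrimeSeq p i) - 1) * 2 ^ i := by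
    rw [Finset.mul_sum]
    refine Finset.sum_congr rfl fun i _ => ?_
    rcases seq_zero_or_one p i with h | h <;> rw [h] <;> push_cast <;> ring
  have hA : ∀ τ : ℕ, ((autocorrB p τ : ℤ) : R) =
      ∑ j ∈ Finset.range N,
        (-1 : R) ^ (modTwoPrimeSeq p ((j + τ) % N) + modTwoPrimeSeq p j) := by
    intro τ
    unfold autocorrB
    rw [← hN]
    rw [Int.cast_sum]
    push_cast
    exact Finset.sum_congr rfl fun j _ => by rw [add_comm]
  have hval : ∀ τ ∈ Finset.range N, ((autocorrB p τ : ℤ) : R) * 2 ^ τ =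
      3 * 2 ^ τ - 4 * (if (p + 2) ∣ τ then (2 : R) ^ τ else 0) +
        (if τ = 0 then ((N : R) + 1) * 2 ^ τ else 0) := by
    intro τ hτ
    rcases eq_or_ne τ 0 with rfl | h0
    · rw [autocorr_zero p, ← hN, if_pos (dvd_zero _), if_pos rfl]
      push_cast
      ring
    · have hlt := Finset.mem_range.mp hτ
      obtain ⟨h1, h2⟩ := hauto τ (Nat.pos_of_ne_zero h0) hlt
      by_cases hd : τ % (p + 2) = 0
      · rw [h1 hd, if_pos (Nat.dvd_of_mod_eq_zero hd), if_neg h0]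
        push_cast
        ring
      · have hnd : ¬ (p + 2) ∣ τ := by
          rw [Nat.dvd_iff_mod_eq_zero]; exact hd
        rw [h2 hd, if_neg hnd, if_neg h0]
        push_cast
        ring
  have hdiv : ((2 ^ (p * (p + 2)) - 1 : ℤ) / (2 ^ (p + 2) - 1 : ℤ)) =
      ∑ k ∈ Finset.range p, ((2 : ℤ) ^ (p + 2)) ^ k := by
    have hgeom := geom_sum_mul ((2 : ℤ) ^ (p + 2)) p
    have hpow : ((2 : ℤ) ^ (p + 2)) ^ p = 2 ^ (p * (p + 2)) := by
      rw [← pow_mul, mul_comm]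
    rw [hpow] at hgeom
    have hne : ((2 : ℤ) ^ (p + 2) - 1) ≠ 0 := by
      have : (2 : ℤ) ^ 1 ≤ 2 ^ (p + 2) := pow_le_pow_right₀ (by norm_num) (by omega)
      simp at this; omega
    rw [← hgeom, Int.mul_ediv_cancel _ hne]
  calc (-2 : R) * (∑ i ∈ Finset.range N, (modTwoPrimeSeq p i : R) * 2 ^ i) *
        (∑ i ∈ Finset.range N, (-1 : R) ^ (modTwoPrimeSeq p i) * ((2 : R)⁻¹) ^ i)
      = (∑ i ∈ Finset.range N, ((-1 : R) ^ (modTwoPrimeSeq p i) - 1) * 2 ^ i) *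
        (∑ j ∈ Finset.range N, (-1 : R) ^ (modTwoPrimeSeq p j) * ((2 : R)⁻¹) ^ j) := by
        rw [hS]
    _ = ∑ i ∈ Finset.range N, ∑ j ∈ Finset.range N,
          (((-1 : R) ^ (modTwoPrimeSeq p i) - 1) * 2 ^ i) *
            ((-1 : R) ^ (modTwoPrimeSeq p j) * ((2 : R)⁻¹) ^ j) :=
        Finset.sum_mul_sum _ _ _ _
    _ = ∑ i ∈ Finset.range N, ∑ j ∈ Finset.range N,
          ((-1 : R) ^ (modTwoPrimeSeq p i + modTwoPrimeSeq p j) * (2 ^ i * ((2 : R)⁻¹) ^ j)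
            - (2 : R) ^ i * ((-1 : R) ^ (modTwoPrimeSeq p j) * ((2 : R)⁻¹) ^ j)) := by
        refine Finset.sum_congr rfl fun i _ => Finset.sum_congr rfl fun j _ => ?_
        rw [pow_add]; ring
    _ = (∑ i ∈ Finset.range N, ∑ j ∈ Finset.range N,
          (-1 : R) ^ (modTwoPrimeSeq p i + modTwoPrimeSeq p j) * (2 ^ i * ((2 : R)⁻¹) ^ j))
        - ∑ i ∈ Finset.range N, ∑ j ∈ Finset.range N,
          (2 : R) ^ i * ((-1 : R) ^ (modTwoPrimeSeq p j) * ((2 : R)⁻¹) ^ j) := by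
        rw [← Finset.sum_sub_distrib]
        exact Finset.sum_congr rfl fun i _ => by rw [Finset.sum_sub_distrib]
    _ = ∑ i ∈ Finset.range N, ∑ j ∈ Finset.range N,
          (-1 : R) ^ (modTwoPrimeSeq p i + modTwoPrimeSeq p j) * (2 ^ i * ((2 : R)⁻¹) ^ j) := by
        rw [← Finset.sum_mul_sum, hgeo, zero_mul, sub_zero]
    _ = ∑ j ∈ Finset.range N, ∑ i ∈ Finset.range N,
          (-1 : R) ^ (modTwoPrimeSeq p i + modTwoPrimeSeq p j) * (2 ^ i * ((2 : R)⁻¹) ^ j) :=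
        Finset.sum_comm
    _ = ∑ j ∈ Finset.range N, ∑ τ ∈ Finset.range N,
          (-1 : R) ^ (modTwoPrimeSeq p ((j + τ) % N) + modTwoPrimeSeq p j) * 2 ^ τ := by
        refine Finset.sum_congr rfl fun j hj => ?_
        rw [shift_sum N j (Finset.mem_range.mp hj)
          (fun i => (-1 : R) ^ (modTwoPrimeSeq p i + modTwoPrimeSeq p j) * (2 ^ i * ((2 : R)⁻¹) ^ j))]
        refine Finset.sum_congr rfl fun τ _ => ?_
        rw [hmodpow (j + τ), pow_add]
        have h := hiv j
        linear_combination ((-1 : R) ^ (modTwoPrimeSeq p ((j + τ) % N) + modTwoPrimeSeq p j) * 2 ^ τ) * h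
    _ = ∑ τ ∈ Finset.range N, ∑ j ∈ Finset.range N,
          (-1 : R) ^ (modTwoPrimeSeq p ((j + τ) % N) + modTwoPrimeSeq p j) * 2 ^ τ :=
        Finset.sum_comm
    _ = ∑ τ ∈ Finset.range N, ((autocorrB p τ : ℤ) : R) * 2 ^ τ := by
        refine Finset.sum_congr rfl fun τ _ => ?_
        rw [← Finset.sum_mul, hA τ]
    _ = ∑ τ ∈ Finset.range N,
          (3 * 2 ^ τ - 4 * (if (p + 2) ∣ τ then (2 : R) ^ τ else 0) +
            (if τ = 0 then ((N : R) + 1) * 2 ^ τ else 0)) :=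
        Finset.sum_congr rfl hval
    _ = 3 * (∑ τ ∈ Finset.range N, (2 : R) ^ τ)
        - 4 * (∑ τ ∈ Finset.range N, if (p + 2) ∣ τ then (2 : R) ^ τ else 0)
        + ∑ τ ∈ Finset.range N, (if τ = 0 then ((N : R) + 1) * 2 ^ τ else 0) := by
        rw [Finset.sum_add_distrib, Finset.sum_sub_distrib, Finset.mul_sum, Finset.mul_sum]
    _ = (N : R) + 1 - 4 * ∑ k ∈ Finset.range p, ((2 : R) ^ (p + 2)) ^ k := by
        rw [hgeo, mult_sum p N hN (2 : R),
          Finset.sum_ite_eq' (Finset.range N) 0 (fun τ => ((N : R) + 1) * 2 ^ τ)]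
        rw [if_pos (Finset.mem_range.mpr hNpos)]
        ring
    _ = (((p * (p + 2) : ℤ) - 4 * ((2 ^ (p * (p + 2)) - 1) / (2 ^ (p + 2) - 1)) + 1 : ℤ) : R) := by
        rw [hdiv]
        have hNc : ((N : ℕ) : R) = (p : R) * ((p : R) + 2) := by
          have h := congrArg (fun n : ℕ => (n : R)) hN
          push_cast at h
          rw [h]
          exact (Nat.cast_mul (α := ZMod (2 ^ N - 1)) p (p + 2)).trans (congrArg ((p : R) * ·) ((Nat.cast_add (R := ZMod (2 ^ N - 1)) p 2).trans (congrArg ((p : R) + ·) (Nat.cast_ofNat (R := ZMod (2 ^ N - 1))))))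
        push_cast
        rw [hNc]
        ring
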